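/- Let A and B be positive definite d×d complex matrices, and let Y₀ be a Hermitian d×d matrix such that [A^{-1/2} Y₀ A^{-1/2}, B] = 0 and [B A^{-1/2} Y₀, A^{-1/2}] + [Y₀ A^{-1/2} B, A^{-1/2}] = 0, where [X, Y] = XY − YX. Then [A^{-1/2} B A^{-1/2}, Y₀] = 0 and the matrix B^{1/2} A^{-1/2} Y₀ A^{-1/2} B^{1/2} commutes with both A and B. -/

import Mathlib

open Matrix
open scoped ComplexOrder

/-- The square root of a positive semidefinite matrix, as defined in Mathlib (Dec 2024),
where it was `Matrix.PosSemidef.sqrt`; it is no longer in Mathlib. -/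
noncomputable def Matrix.PosSemidef.sqrt {n : Type*} [Fintype n] [DecidableEq n] {𝕜 : Type*}
    [RCLike 𝕜] {A : Matrix n n 𝕜} (hA : A.PosSemidef) : Matrix n n 𝕜 :=
  hA.1.eigenvectorUnitary.1 * diagonal ((↑) ∘ (√·) ∘ hA.1.eigenvalues) *
    (star hA.1.eigenvectorUnitary : Matrix n n 𝕜)

lemma sqrt_mul_self_aux {n : Type*} [Fintype n] [DecidableEq n]
    {B : Matrix n n ℂ} (hB : B.PosSemidef) : hB.sqrt * hB.sqrt = B := by
  have hUU : (star hB.1.eigenvectorUnitary.1) * hB.1.eigenvectorUnitary.1 = 1 :=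
    Matrix.mem_unitaryGroup_iff'.mp hB.1.eigenvectorUnitary.2
  conv_rhs => rw [hB.1.spectral_theorem, Unitary.conjStarAlgAut_apply]
  unfold Matrix.PosSemidef.sqrt
  rw [show ∀ U D S : Matrix n n ℂ, U * D * S * (U * D * S) = U * D * (S * U) * D * S by
    intros; simp only [Matrix.mul_assoc], hUU, Matrix.mul_one, Matrix.mul_assoc _ (diagonal _) (diagonal _), diagonal_mul_diagonal]
  congr 3
  funext i
  simp only [Function.comp_apply]
  rw [← RCLike.ofReal_mul, Real.mul_self_sqrt (hB.eigenvalues_nonneg i)]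

/-- Cancellation with a two-sided inverse. -/
lemma cancel_aux {M : Type*} [Monoid M] {R S : M} (hRS : R * S = 1) (hSR : S * R = 1)
    {X Y : M} (h : S * X * S = S * Y * S) : X = Y := by
  have k : ∀ W : M, R * (S * W * S) * R = W := fun W => by
    calc R * (S * W * S) * R = (R * S) * W * (S * R) := by simp only [mul_assoc]
    _ = W := by rw [hRS, hSR, one_mul, mul_one]
  rw [← k X, h, k Y]

/-- Abstract (noncommutative ring) version of the commutation argument. -/
lemma main_aux {M : Type*} [Ring M] (R S T B Y : M)
    (hRS : R * S = 1) (hSR : S * R = 1) (hTT : T * T = B)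
    (h1' : (S * Y * S) * B = B * (S * Y * S))
    (hZT : (S * Y * S) * T = T * (S * Y * S))
    (g1' : (S * B * S) * Y = Y * (S * B * S)) :
    (T * S * Y * S * T) * (R * R) = (R * R) * (T * S * Y * S * T) ∧
    (T * S * Y * S * T) * B = B * (T * S * Y * S * T) := by
  have hC2 : T * S * Y * S * T = B * (S * Y * S) := by
    calc T * S * Y * S * T = T * ((S * Y * S) * T) := by simp only [mul_assoc]
    _ = T * (T * (S * Y * S)) := by rw [hZT]
    _ = (T * T) * (S * Y * S) := by rw [← mul_assoc]
    _ = B * (S * Y * S) := by rw [hTT]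
  have hC1 : T * S * Y * S * T = (S * Y * S) * B := by rw [hC2, h1']
  have hkey : B * (S * (Y * R)) = R * (Y * (S * B)) := by
    refine cancel_aux hRS hSR ?_
    calc S * (B * (S * (Y * R))) * S = (S * B * S) * Y * (R * S) := by simp only [mul_assoc]
    _ = (S * B * S) * Y := by rw [hRS, mul_one]
    _ = Y * (S * B * S) := g1'
    _ = (S * R) * (Y * (S * (B * S))) := by rw [hSR, one_mul]; simp only [mul_assoc]
    _ = S * (R * (Y * (S * B))) * S := by simp only [mul_assoc]
  constructor
  · calc (T * S * Y * S * T) * (R * R) = (B * (S * Y * S)) * (R * R) := by rw [hC2]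
    _ = B * (S * (Y * ((S * R) * R))) := by simp only [mul_assoc]
    _ = B * (S * (Y * R)) := by rw [hSR, one_mul]
    _ = R * (Y * (S * B)) := hkey
    _ = (R * (R * S)) * (Y * (S * B)) := by rw [hRS, mul_one]
    _ = (R * R) * ((S * Y * S) * B) := by simp only [mul_assoc]
    _ = (R * R) * (T * S * Y * S * T) := by rw [hC1]
  · calc (T * S * Y * S * T) * B = ((S * Y * S) * B) * B := by rw [hC1]
    _ = (B * (S * Y * S)) * B := by rw [h1']
    _ = B * ((S * Y * S) * B) := by rw [mul_assoc]
    _ = B * (T * S * Y * S * T) := by rw [hC1]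

/-- If a matrix commutes with a positive semidefinite matrix, it commutes with its square
root. -/
lemma commute_posSemidef_sqrt {n : Type*} [Fintype n] [DecidableEq n]
    {B : Matrix n n ℂ} (hB : B.PosSemidef) {Z : Matrix n n ℂ} (h : Z * B = B * Z) :
    Z * hB.sqrt = hB.sqrt * Z := by
  have hB1 := hB.1
  set U : Matrix n n ℂ := hB1.eigenvectorUnitary.1 with hUdef
  have hUU : star U * U = 1 := Matrix.mem_unitaryGroup_iff'.mp hB1.eigenvectorUnitary.2
  have hUU' : U * star U = 1 := Matrix.mem_unitaryGroup_iff.mp hB1.eigenvectorUnitary.2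
  set dvec : n → ℂ := RCLike.ofReal ∘ hB1.eigenvalues with hdvec
  set fvec : n → ℂ := (↑) ∘ Real.sqrt ∘ hB1.eigenvalues with hfvec
  have hdiagB : star U * B * U = diagonal dvec := by
    have := hB1.conjStarAlgAut_star_eigenvectorUnitary
    rwa [Unitary.conjStarAlgAut_star_apply] at this
  have hsq : hB.sqrt = U * diagonal fvec * star U := rfl
  set W : Matrix n n ℂ := star U * Z * U with hW
  have hWd : W * diagonal dvec = diagonal dvec * W := by
    calc W * diagonal dvec = star U * Z * U * (star U * B * U) := by rw [hdiagB]
    _ = star U * Z * (U * star U) * B * U := by simp only [Matrix.mul_assoc]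
    _ = star U * (Z * B) * U := by rw [hUU']; simp only [Matrix.mul_assoc, Matrix.one_mul]
    _ = star U * (B * Z) * U := by rw [h]
    _ = star U * B * (U * star U) * Z * U := by
          rw [hUU']; simp only [Matrix.mul_assoc, Matrix.one_mul]
    _ = (star U * B * U) * (star U * Z * U) := by simp only [Matrix.mul_assoc]
    _ = diagonal dvec * W := by rw [hdiagB]
  have hWf : W * diagonal fvec = diagonal fvec * W := by
    ext i j
    have hij := congrFun (congrFun hWd i) j
    simp only [Matrix.mul_diagonal, Matrix.diagonal_mul] at hij ⊢
    by_cases hw : W i j = 0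
    · simp [hw]
    · have hdij : dvec j = dvec i := mul_left_cancel₀ hw (by rw [hij, mul_comm])
      have heig : hB1.eigenvalues j = hB1.eigenvalues i := by
        have := hdij
        simp only [hdvec, Function.comp_apply] at this
        exact_mod_cast this
      simp only [hfvec, Function.comp_apply, heig]
      ring
  calc Z * hB.sqrt = (U * W * star U) * (U * diagonal fvec * star U) := by
        rw [hsq, hW]
        rw [show U * (star U * Z * U) * star U = (U * star U) * Z * (U * star U) by
          simp only [Matrix.mul_assoc], hUU']
        simp
  _ = U * W * (star U * U) * diagonal fvec * star U := by simp only [Matrix.mul_assoc]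
  _ = U * (W * diagonal fvec) * star U := by
        rw [hUU]; simp only [Matrix.mul_assoc, Matrix.mul_one, Matrix.one_mul]
  _ = U * (diagonal fvec * W) * star U := by rw [hWf]
  _ = U * diagonal fvec * (star U * U) * W * star U := by
        rw [hUU]; simp only [Matrix.mul_assoc, Matrix.mul_one, Matrix.one_mul]
  _ = (U * diagonal fvec * star U) * (U * W * star U) := by simp only [Matrix.mul_assoc]
  _ = hB.sqrt * Z := by
        rw [hsq, hW]
        rw [show U * (star U * Z * U) * star U = (U * star U) * Z * (U * star U) by
          simp only [Matrix.mul_assoc], hUU']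
        simp

/-- If `Y₀` is Hermitian with `[A^{-1/2} Y₀ A^{-1/2}, B] = 0` and
`[B A^{-1/2} Y₀, A^{-1/2}] + [Y₀ A^{-1/2} B, A^{-1/2}] = 0`, then
`[A^{-1/2} B A^{-1/2}, Y₀] = 0` and `B^{1/2} A^{-1/2} Y₀ A^{-1/2} B^{1/2}` commutes with
both `A` and `B`. -/
theorem commutant_of_orthogonality_relations (d : ℕ) (A B : Matrix (Fin d) (Fin d) ℂ)
    (hA : A.PosDef) (hB : B.PosDef) (Y₀ : Matrix (Fin d) (Fin d) ℂ) (hY₀ : Y₀.IsHermitian)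
    (h1 : ((Matrix.PosSemidef.sqrt hA.posSemidef)⁻¹ * Y₀ * (Matrix.PosSemidef.sqrt hA.posSemidef)⁻¹) * B
        - B * ((Matrix.PosSemidef.sqrt hA.posSemidef)⁻¹ * Y₀ * (Matrix.PosSemidef.sqrt hA.posSemidef)⁻¹) = 0)
    (h2 : ((B * (Matrix.PosSemidef.sqrt hA.posSemidef)⁻¹ * Y₀) * (Matrix.PosSemidef.sqrt hA.posSemidef)⁻¹
          - (Matrix.PosSemidef.sqrt hA.posSemidef)⁻¹ * (B * (Matrix.PosSemidef.sqrt hA.posSemidef)⁻¹ * Y₀))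
        + ((Y₀ * (Matrix.PosSemidef.sqrt hA.posSemidef)⁻¹ * B) * (Matrix.PosSemidef.sqrt hA.posSemidef)⁻¹
          - (Matrix.PosSemidef.sqrt hA.posSemidef)⁻¹ * (Y₀ * (Matrix.PosSemidef.sqrt hA.posSemidef)⁻¹ * B)) = 0) :
    ((Matrix.PosSemidef.sqrt hA.posSemidef)⁻¹ * B * (Matrix.PosSemidef.sqrt hA.posSemidef)⁻¹) * Y₀
        - Y₀ * ((Matrix.PosSemidef.sqrt hA.posSemidef)⁻¹ * B * (Matrix.PosSemidef.sqrt hA.posSemidef)⁻¹) = 0 ∧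
    ((Matrix.PosSemidef.sqrt hB.posSemidef) * (Matrix.PosSemidef.sqrt hA.posSemidef)⁻¹ * Y₀ * (Matrix.PosSemidef.sqrt hA.posSemidef)⁻¹
        * (Matrix.PosSemidef.sqrt hB.posSemidef)) * A
      = A * ((Matrix.PosSemidef.sqrt hB.posSemidef) * (Matrix.PosSemidef.sqrt hA.posSemidef)⁻¹ * Y₀ * (Matrix.PosSemidef.sqrt hA.posSemidef)⁻¹
        * (Matrix.PosSemidef.sqrt hB.posSemidef)) ∧
    ((Matrix.PosSemidef.sqrt hB.posSemidef) * (Matrix.PosSemidef.sqrt hA.posSemidef)⁻¹ * Y₀ * (Matrix.PosSemidef.sqrt hA.posSemidef)⁻¹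
        * (Matrix.PosSemidef.sqrt hB.posSemidef)) * B
      = B * ((Matrix.PosSemidef.sqrt hB.posSemidef) * (Matrix.PosSemidef.sqrt hA.posSemidef)⁻¹ * Y₀ * (Matrix.PosSemidef.sqrt hA.posSemidef)⁻¹
        * (Matrix.PosSemidef.sqrt hB.posSemidef)) := by
  set R := hA.posSemidef.sqrt with hRdef
  set S := R⁻¹ with hSdef
  set T := hB.posSemidef.sqrt with hTdef
  have hRR : R * R = A := sqrt_mul_self_aux hA.posSemidef
  have hdetR : IsUnit R.det := by
    have hdet : R.det * R.det = A.det := by rw [← Matrix.det_mul, hRR]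
    have hAunit : IsUnit A.det := hA.isUnit.map Matrix.detMonoidHom
    rw [← hdet] at hAunit
    exact isUnit_of_mul_isUnit_left hAunit
  have hRS : R * S = 1 := Matrix.mul_nonsing_inv R hdetR
  have hSR : S * R = 1 := Matrix.nonsing_inv_mul R hdetR
  have hTT : T * T = B := sqrt_mul_self_aux hB.posSemidef
  have g1 : (S * B * S) * Y₀ - Y₀ * (S * B * S) = 0 := by
    have key : (S * B * S) * Y₀ - Y₀ * (S * B * S)
        = -(((B * S * Y₀) * S - S * (B * S * Y₀))
            + ((Y₀ * S * B) * S - S * (Y₀ * S * B)))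
          - ((S * Y₀ * S) * B - B * (S * Y₀ * S)) := by
      noncomm_ring
    rw [key, h1, h2]
    simp
  have g1' : (S * B * S) * Y₀ = Y₀ * (S * B * S) := sub_eq_zero.mp g1
  have h1' : (S * Y₀ * S) * B = B * (S * Y₀ * S) := sub_eq_zero.mp h1
  have hZT : (S * Y₀ * S) * T = T * (S * Y₀ * S) :=
    commute_posSemidef_sqrt hB.posSemidef h1'
  obtain ⟨ha, hb⟩ := main_aux R S T B Y₀ hRS hSR hTT h1' hZT g1'
  refine ⟨g1, ?_, hb⟩
  rw [← hRR]
  exact ha
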